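/- Let $F$ be a finite field with $q$ elements and let $W$ be a fixed $w \times w$ matrix over $F$. If $S$ is a random $w \times w$ diagonal matrix whose diagonal entries $s_1,\dots,s_w$ are chosen independently and uniformly at random from $F$, then the probability that $S - W$ is invertible is at least $1 - w/q$. -/

import Mathlib

open Finset Matrix

private lemma det_cons_eq {F : Type*} [Field F] (w : ℕ) (W : Matrix (Fin (w+1)) (Fin (w+1)) F)
    (s : Fin w → F) (t : F) :
    (Matrix.diagonal (Fin.cons t s) - W).det
      = t * (Matrix.diagonal s - W.submatrix Fin.succ Fin.succ).det
        + (Matrix.diagonal (Fin.cons (0:F) s) - W).det := by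
  have hsub : ∀ (u : F) (j : Fin w),
      (Matrix.diagonal (Fin.cons u s) - W).submatrix Fin.succ (Fin.succ j).succAbove
        = (Matrix.diagonal (Fin.cons (0:F) s) - W).submatrix Fin.succ (Fin.succ j).succAbove := by
    intro u j
    ext i k
    simp [Matrix.diagonal_apply, Fin.cons_succ]
  have hsub0 : ∀ (u : F),
      (Matrix.diagonal (Fin.cons u s) - W).submatrix Fin.succ Fin.succ
        = Matrix.diagonal s - W.submatrix Fin.succ Fin.succ := by
    intro u
    ext i k
    simp [Matrix.diagonal_apply, Fin.cons_succ, Fin.succ_inj]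
  rw [Matrix.det_succ_row_zero, Matrix.det_succ_row_zero (Matrix.diagonal (Fin.cons (0:F) s) - W)]
  rw [Fin.sum_univ_succ, Fin.sum_univ_succ]
  simp only [Fin.succAbove_zero, hsub0, hsub, Matrix.sub_apply, Matrix.diagonal_apply,
    Fin.cons_zero, Fin.cons_succ, if_pos rfl]
  have hne : ∀ j : Fin w, ((0 : Fin (w+1)) = Fin.succ j) = False := by
    intro j; simp [(Fin.succ_ne_zero j).symm]
  simp only [hne, if_false, if_true, zero_sub, neg_mul, mul_neg, Fin.val_zero, pow_zero,
    one_mul, mul_one]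
  ring

private lemma badcard_mul_le {F : Type*} [Field F] [Fintype F] [DecidableEq F] :
    ∀ (w : ℕ) (W : Matrix (Fin w) (Fin w) F),
      (Finset.univ.filter fun s : Fin w → F => (Matrix.diagonal s - W).det = 0).card
          * Fintype.card F
        ≤ w * (Fintype.card F) ^ w
  | 0, W => by
      simp [Matrix.det_fin_zero]
  | (w+1), W => by
      set q := Fintype.card F with hqdef
      set W' := W.submatrix Fin.succ Fin.succ with hW'
      have hcard : (Finset.univ.filter
            fun s : Fin (w+1) → F => (Matrix.diagonal s - W).det = 0).card
          = ∑ s : Fin w → F,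
              (Finset.univ.filter
                fun t : F => (Matrix.diagonal (Fin.cons t s) - W).det = 0).card := by
        rw [Finset.card_eq_sum_card_fiberwise (f := Fin.tail) (t := Finset.univ)
          (fun x _ => Finset.mem_univ _)]
        refine Finset.sum_congr rfl fun s _ => ?_
        refine Finset.card_bij (fun x _ => x 0) ?_ ?_ ?_
        · intro x hx
          simp only [Finset.mem_filter, Finset.mem_univ, true_and] at hx ⊢
          obtain ⟨h1, h2⟩ := hx
          rw [← h2]
          rwa [← Fin.cons_self_tail x] at h1
        · intro x hx y hy hxy
          simp only [Finset.mem_filter] at hx hy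
          rw [← Fin.cons_self_tail x, ← Fin.cons_self_tail y, hx.2, hy.2]
          rw [hxy]
        · intro t ht
          simp only [Finset.mem_filter, Finset.mem_univ, true_and] at ht
          exact ⟨Fin.cons t s, by simp [ht, Fin.tail_cons], by simp⟩
      have hfiber : ∀ s : Fin w → F,
          (Finset.univ.filter
            fun t : F => (Matrix.diagonal (Fin.cons t s) - W).det = 0).card
          ≤ if (Matrix.diagonal s - W').det = 0 then q else 1 := by
        intro s
        by_cases h : (Matrix.diagonal s - W').det = 0
        · rw [if_pos h]
          exact le_trans (Finset.card_filter_le _ _) (le_of_eq Finset.card_univ)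
        · rw [if_neg h]
          refine Finset.card_le_one.mpr fun t1 h1 t2 h2 => ?_
          simp only [Finset.mem_filter, Finset.mem_univ, true_and] at h1 h2
          rw [det_cons_eq, ← hW'] at h1 h2
          have := h1.trans h2.symm
          have := add_right_cancel this
          exact mul_right_cancel₀ h this
      have hsum : ∑ s : Fin w → F,
            (if (Matrix.diagonal s - W').det = 0 then q else 1)
          ≤ (Finset.univ.filter
              fun s : Fin w → F => (Matrix.diagonal s - W').det = 0).card * q + q ^ w := by
        rw [Finset.sum_ite, Finset.sum_const, Finset.sum_const, smul_eq_mul, smul_eq_mul, mul_one]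
        have h1 : (Finset.univ.filter
            fun s : Fin w → F => ¬ (Matrix.diagonal s - W').det = 0).card ≤ q ^ w := by
          calc _ ≤ (Finset.univ : Finset (Fin w → F)).card := Finset.card_filter_le _ _
            _ = q ^ w := by simp [hqdef, Finset.card_univ]
        exact Nat.add_le_add_left h1 _
      have hmain : (Finset.univ.filter
            fun s : Fin (w+1) → F => (Matrix.diagonal s - W).det = 0).card
          ≤ (Finset.univ.filter
              fun s : Fin w → F => (Matrix.diagonal s - W').det = 0).card * q + q ^ w := by
        rw [hcard]
        exact le_trans (Finset.sum_le_sum fun s _ => hfiber s) hsum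
      have ih := badcard_mul_le w W'
      calc (Finset.univ.filter
            fun s : Fin (w+1) → F => (Matrix.diagonal s - W).det = 0).card * q
          ≤ ((Finset.univ.filter
              fun s : Fin w → F => (Matrix.diagonal s - W').det = 0).card * q + q ^ w) * q :=
            Nat.mul_le_mul_right _ hmain
        _ = (Finset.univ.filter
              fun s : Fin w → F => (Matrix.diagonal s - W').det = 0).card * q * q
            + q ^ (w+1) := by ring
        _ ≤ w * q ^ w * q + q ^ (w+1) := Nat.add_le_add_right (Nat.mul_le_mul_right _ ih) _
        _ = (w+1) * q ^ (w+1) := by ring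

/-- If `W` is a fixed `w × w` matrix over a finite field `F` with `q` elements and the
diagonal entries of a diagonal matrix `S` are chosen independently and uniformly at random
from `F`, then `S - W` is invertible with probability at least `1 - w/q`. -/
theorem stmt0 (F : Type*) [Field F] [Fintype F] [DecidableEq F] (w : ℕ)
    (W : Matrix (Fin w) (Fin w) F) :
    (((Finset.univ.filter
        (fun s : Fin w → F => IsUnit (Matrix.diagonal s - W))).card : ℝ) /
      ((Fintype.card F : ℝ) ^ w))
      ≥ 1 - (w : ℝ) / (Fintype.card F : ℝ) := by
  classical
  have hq1 : 0 < Fintype.card F := Fintype.card_pos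
  have hbad := badcard_mul_le w W
  set g := (Finset.univ.filter
      (fun s : Fin w → F => IsUnit (Matrix.diagonal s - W))).card with hg
  set b := (Finset.univ.filter
      (fun s : Fin w → F => (Matrix.diagonal s - W).det = 0)).card with hb
  have hcompl : g + b = Fintype.card F ^ w := by
    have h1 : (Finset.univ.filter
        (fun s : Fin w → F => IsUnit (Matrix.diagonal s - W)))
        = (Finset.univ.filter
        (fun s : Fin w → F => ¬ (Matrix.diagonal s - W).det = 0)) := by
      refine Finset.filter_congr fun s _ => ?_
      rw [Matrix.isUnit_iff_isUnit_det, isUnit_iff_ne_zero]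
    rw [hg, hb, h1, add_comm,
      Finset.card_filter_add_card_filter_not
        (p := fun s : Fin w → F => (Matrix.diagonal s - W).det = 0)]
    simp [Finset.card_univ]
  have hqR : (0:ℝ) < (Fintype.card F : ℝ) := by exact_mod_cast hq1
  have hqwR : (0:ℝ) < (Fintype.card F : ℝ) ^ w := by positivity
  have hgR : (g : ℝ) = (Fintype.card F : ℝ) ^ w - b := by
    have : (g : ℝ) + b = (Fintype.card F : ℝ) ^ w := by exact_mod_cast congrArg (Nat.cast (R := ℝ)) hcompl
    linarith
  have hbadR : (b : ℝ) * (Fintype.card F : ℝ) ≤ (w : ℝ) * (Fintype.card F : ℝ) ^ w := by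
    exact_mod_cast hbad
  rw [ge_iff_le, hgR, sub_div, div_self (ne_of_gt hqwR)]
  have : (b : ℝ) / (Fintype.card F : ℝ) ^ w ≤ (w : ℝ) / (Fintype.card F : ℝ) := by
    rw [div_le_div_iff₀ hqwR hqR]
    exact hbadR
  linarith
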